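/- arXiv:1603.05041 — 2 statements merged into one kernel-verified Lean document; each statement's English description precedes it below -/
import Mathlib

section
/- Let κ be a positive integer and u a nonzero real number. Then for every real z, lim_{a→1} m_κ^{1/a, -κ+1-(1-a)^κ/u}(z) = (-1)^κ/(κ u) + (z-κ+1)_κ / κ!, where (y)_κ is the Pochhammer symbol. -/
open Filter Topology Finset

/-- Generalized binomial coefficient C(y, k) = y(y-1)⋯(y-k+1)/k!. -/
noncomputable def gbinom (y : ℝ) (k : ℕ) : ℝ :=
  (∏ i ∈ Finset.range k, (y - i)) / (Nat.factorial k)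

/-- Pochhammer symbol (y)_k = y(y+1)⋯(y+k-1). -/
noncomputable def poch (y : ℝ) (k : ℕ) : ℝ :=
  ∏ i ∈ Finset.range k, (y + i)

/-- Meixner polynomial m_n^{a,c}(x). -/
noncomputable def meixner (n : ℕ) (a c x : ℝ) : ℝ :=
  (a ^ n / (1 - a) ^ n) *
    ∑ j ∈ Finset.range (n + 1), (a⁻¹) ^ j * gbinom x j * gbinom (-x - c) (n - j)

/- ### Auxiliary lemmas -/

lemma descPoch_smeval_real (y : ℝ) (k : ℕ) :
    (descPochhammer ℤ k).smeval y = ∏ i ∈ Finset.range k, (y - i) := by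
  induction k with
  | zero => simp [descPochhammer_zero, Polynomial.smeval_one]
  | succ k ih =>
      rw [descPochhammer_succ_right, Polynomial.smeval_mul, ih, Finset.prod_range_succ]
      congr 1
      rw [Polynomial.smeval_sub, Polynomial.smeval_X, Polynomial.smeval_natCast]
      simp

lemma gbinom_eq_choose (y : ℝ) (k : ℕ) : gbinom y k = Ring.choose y k := by
  have h := Ring.descPochhammer_eq_factorial_smul_choose y k
  rw [descPoch_smeval_real, nsmul_eq_mul] at h
  have hk : (k.factorial : ℝ) ≠ 0 := Nat.cast_ne_zero.mpr k.factorial_ne_zero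
  unfold gbinom
  rw [h, mul_div_cancel_left₀ _ hk]

/-- Chu–Vandermonde for real arguments. -/
lemma vand (κ : ℕ) (z y : ℝ) :
    ∑ j ∈ Finset.range (κ + 1), gbinom z j * gbinom y (κ - j) = gbinom (z + y) κ := by
  simp only [gbinom_eq_choose]
  rw [Ring.add_choose_eq κ (Commute.all z y), Finset.Nat.sum_antidiagonal_eq_sum_range_succ_mk]

lemma prod_desc_nat (n : ℕ) : ∏ i ∈ Finset.range n, ((n : ℝ) - i) = n.factorial := by
  rw [← descPoch_smeval_real, Polynomial.descPochhammer_smeval_eq_descFactorial,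
    Nat.descFactorial_self]

/-- the `q` polynomials: ∏(w+e-i) = ∏(w-i) + e * qq w m e -/
noncomputable def qq (w : ℝ) : ℕ → ℝ → ℝ
  | 0 => fun _ => 0
  | m + 1 => fun e => qq w m e * (w + e - m) + ∏ i ∈ Finset.range m, (w - i)

lemma qq_spec (w : ℝ) (m : ℕ) (e : ℝ) :
    ∏ i ∈ Finset.range m, (w + e - i) = (∏ i ∈ Finset.range m, (w - i)) + e * qq w m e := by
  induction m with
  | zero => simp [qq]
  | succ m ih =>
      rw [Finset.prod_range_succ, Finset.prod_range_succ, ih]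
      simp only [qq]
      ring

lemma qq_cont (w : ℝ) (m : ℕ) : Continuous (qq w m) := by
  induction m with
  | zero => simpa only [qq] using continuous_const
  | succ m ih =>
      simp only [qq]
      exact (ih.mul (by continuity)).add continuous_const

lemma gbinom_split (w e : ℝ) (m : ℕ) :
    gbinom (w + e) m = gbinom w m + e * (qq w m e / m.factorial) := by
  unfold gbinom
  rw [qq_spec, add_div]
  ring

/-- the continuous correction function -/
noncomputable def GG (w zv : ℝ) (κ : ℕ) (p : ℝ × ℝ) : ℝ :=
  ∑ j ∈ Finset.range (κ + 1), p.1 ^ j * gbinom zv j * (qq w (κ - j) p.2 / ((κ - j).factorial))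

lemma GG_cont (w zv : ℝ) (κ : ℕ) : Continuous (GG w zv κ) := by
  refine continuous_finset_sum _ fun j _ => ?_
  exact ((continuous_fst.pow j).mul continuous_const).mul
    (((qq_cont w (κ - j)).comp continuous_snd).div_const _)

/-- key polynomial identity in `a` -/
lemma key1 (κ : ℕ) (z a : ℝ) :
    ∑ j ∈ Finset.range (κ + 1), a ^ j * gbinom z j * gbinom ((κ : ℝ) - 1 - z) (κ - j)
      = gbinom z κ * (a - 1) ^ κ := by
  have hterm : ∀ j ∈ Finset.range (κ + 1),
      a ^ j * gbinom z j * gbinom ((κ : ℝ) - 1 - z) (κ - j)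
        = gbinom z κ * (a ^ j * (-1 : ℝ) ^ (κ - j) * (κ.choose j)) := by
    intro j hj
    have hjκ : j ≤ κ := by simpa using Nat.lt_succ_iff.mp (Finset.mem_range.mp hj)
    set m : ℕ := κ - j with hm
    have hjm : j + m = κ := by omega
    -- rewrite the product for the second gbinom
    have h1 : ∏ i ∈ Finset.range m, ((κ : ℝ) - 1 - z - i)
        = (-1 : ℝ) ^ m * ∏ i ∈ Finset.range m, (z - ((j + i : ℕ) : ℝ)) := by
      have h2 : ∀ i ∈ Finset.range m, ((κ : ℝ) - 1 - z - i)
          = (fun i => -(z - ((j + i : ℕ) : ℝ))) (m - 1 - i) := by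
        intro i hi
        have hi' : i < m := Finset.mem_range.mp hi
        have hc : ((j + (m - 1 - i) : ℕ) : ℝ) = (κ : ℝ) - 1 - i := by
          have h3 : (j + (m - 1 - i) : ℕ) = κ - (1 + i) := by omega
          rw [h3, Nat.cast_sub (by omega)]
          push_cast
          ring
        simp only [hc]
        ring
      rw [Finset.prod_congr rfl h2, Finset.prod_range_reflect (fun i => -(z - ((j + i : ℕ) : ℝ))) m]
      rw [show (fun i => -(z - ((j + i : ℕ) : ℝ))) = fun i => (-1 : ℝ) * (z - ((j + i : ℕ) : ℝ))
        from funext fun i => by ring]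
      rw [Finset.prod_mul_distrib, Finset.prod_const, Finset.card_range]
    have h5 : (∏ i ∈ Finset.range j, (z - i)) * ∏ i ∈ Finset.range m, (z - ((j + i : ℕ) : ℝ))
        = ∏ i ∈ Finset.range κ, (z - i) := by
      rw [← hjm, Finset.prod_range_add]
    have hfac : (κ.choose j : ℝ) * j.factorial * m.factorial = κ.factorial := by
      rw [hm]
      exact_mod_cast congrArg (fun t : ℕ => (t : ℝ)) (Nat.choose_mul_factorial_mul_factorial hjκ)
    have hj0 : (j.factorial : ℝ) ≠ 0 := Nat.cast_ne_zero.mpr j.factorial_ne_zero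
    have hm0 : (m.factorial : ℝ) ≠ 0 := Nat.cast_ne_zero.mpr m.factorial_ne_zero
    have hκ0 : (κ.factorial : ℝ) ≠ 0 := Nat.cast_ne_zero.mpr κ.factorial_ne_zero
    have hch : (κ.choose j : ℝ) ≠ 0 := Nat.cast_ne_zero.mpr (Nat.choose_pos hjκ).ne'
    unfold gbinom
    rw [h1, ← h5, ← hfac]
    field_simp
  rw [Finset.sum_congr rfl hterm, ← Finset.mul_sum]
  congr 1
  have := add_pow a (-1 : ℝ) κ
  rw [show a + (-1 : ℝ) = a - 1 by ring] at this
  rw [← this]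

lemma gbinom_poch (z : ℝ) (κ : ℕ) : gbinom z κ = poch (z - κ + 1) κ / κ.factorial := by
  unfold gbinom poch
  congr 1
  rw [← Finset.prod_range_reflect (fun i => z - (κ : ℝ) + 1 + i) κ]
  refine Finset.prod_congr rfl fun i hi => ?_
  have hi' : i < κ := Finset.mem_range.mp hi
  have : ((κ - 1 - i : ℕ) : ℝ) = (κ : ℝ) - 1 - i := by
    have h3 : (κ - 1 - i : ℕ) + (1 + i) = κ := by omega
    have h4 := congrArg (fun t : ℕ => (t : ℝ)) h3
    push_cast at h4
    linarith
  rw [this]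
  ring

lemma meixner_eq (κ : ℕ) (u : ℝ) (hu : u ≠ 0) (z : ℝ) (a : ℝ) (ha : a ≠ 0) (ha1 : a ≠ 1) :
    meixner κ a⁻¹ (-(κ : ℝ) + 1 - (1 - a) ^ κ / u) z
      = gbinom z κ + ((-1 : ℝ) ^ κ / u) * GG ((κ : ℝ) - 1 - z) z κ (a, (1 - a) ^ κ / u) := by
  have ha1' : a - 1 ≠ 0 := sub_ne_zero.mpr ha1
  set w : ℝ := (κ : ℝ) - 1 - z with hw
  set e : ℝ := (1 - a) ^ κ / u with he
  have harg : -z - (-(κ : ℝ) + 1 - (1 - a) ^ κ / u) = w + e := by rw [hw, he]; ring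
  unfold meixner
  rw [harg, inv_inv]
  have hsum : ∑ j ∈ Finset.range (κ + 1), a ^ j * gbinom z j * gbinom (w + e) (κ - j)
      = gbinom z κ * (a - 1) ^ κ + e * GG w z κ (a, e) := by
    have : ∀ j ∈ Finset.range (κ + 1), a ^ j * gbinom z j * gbinom (w + e) (κ - j)
        = a ^ j * gbinom z j * gbinom w (κ - j)
          + e * (a ^ j * gbinom z j * (qq w (κ - j) e / ((κ - j).factorial))) := by
      intro j _
      rw [gbinom_split]
      ring
    rw [Finset.sum_congr rfl this, Finset.sum_add_distrib, ← Finset.mul_sum, key1 κ z a]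
    rfl
  rw [hsum]
  have hpa : a ^ κ ≠ 0 := pow_ne_zero _ ha
  have hpa1 : (a - 1) ^ κ ≠ 0 := pow_ne_zero _ ha1'
  have hpre : a⁻¹ ^ κ / (1 - a⁻¹) ^ κ = 1 / (a - 1) ^ κ := by
    have h : 1 - a⁻¹ = (a - 1) / a := by field_simp
    rw [h, div_pow, inv_pow]
    field_simp
  rw [hpre]
  have hoe : e = (-1 : ℝ) ^ κ * (a - 1) ^ κ / u := by
    rw [he, ← neg_sub a 1, neg_pow]
  rw [hoe]
  field_simp

lemma G10 (κ : ℕ) (hκ : 0 < κ) (z : ℝ) :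
    GG ((κ : ℝ) - 1 - z) z κ (1, 0) = 1 / (κ : ℝ) := by
  obtain ⟨n, rfl⟩ : ∃ n, κ = n + 1 := ⟨κ - 1, by omega⟩
  set w : ℝ := ((n + 1 : ℕ) : ℝ) - 1 - z with hw
  set g : ℝ → ℝ := fun e => GG w z (n + 1) (1, e) with hg
  set r : ℝ → ℝ := fun e => (∏ i ∈ Finset.range n, ((n : ℝ) + e - i)) / (n + 1).factorial with hr
  have heq : Set.EqOn g r {(0 : ℝ)}ᶜ := by
    intro e he0
    have he : e ≠ 0 := he0
    have hmul : e * g e = e * r e := by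
      have h1 : e * g e = ∑ j ∈ Finset.range (n + 2),
          gbinom z j * (gbinom (w + e) (n + 1 - j) - gbinom w (n + 1 - j)) := by
        rw [hg]
        simp only [GG, one_pow, one_mul, Finset.mul_sum]
        refine Finset.sum_congr rfl fun j _ => ?_
        rw [gbinom_split]
        ring
      rw [h1]
      have h2 : ∑ j ∈ Finset.range (n + 2),
          gbinom z j * (gbinom (w + e) (n + 1 - j) - gbinom w (n + 1 - j))
          = gbinom (z + (w + e)) (n + 1) - gbinom (z + w) (n + 1) := by
        rw [← vand (n + 1) z (w + e), ← vand (n + 1) z w, ← Finset.sum_sub_distrib]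
        exact Finset.sum_congr rfl fun j _ => by ring
      rw [h2]
      have hzwe : z + (w + e) = (n : ℝ) + e := by rw [hw]; push_cast; ring
      have hzw' : z + w = (n : ℝ) := by rw [hw]; push_cast; ring
      rw [hzwe, hzw']
      have hb0 : gbinom ((n : ℝ)) (n + 1) = 0 := by
        unfold gbinom
        rw [Finset.prod_eq_zero (Finset.self_mem_range_succ n) (by simp)]
        simp
      have hb1 : gbinom ((n : ℝ) + e) (n + 1) = e * r e := by
        unfold gbinom
        rw [Finset.prod_range_succ, hr]
        have h3 : (n : ℝ) + e - n = e := by ring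
        rw [h3]
        ring
      rw [hb0, hb1]
      ring
    exact mul_left_cancel₀ he hmul
  have hgc : Continuous g := by
    rw [hg]
    exact (GG_cont w z (n + 1)).comp (continuous_const.prodMk continuous_id)
  have hrc : Continuous r := by
    rw [hr]
    exact (continuous_finset_prod _ fun i _ => by continuity).div_const _
  have hall : g = r := Continuous.ext_on (dense_compl_singleton 0) hgc hrc heq
  have h0 : g 0 = r 0 := by rw [hall]
  have hr0 : r 0 = 1 / ((n + 1 : ℕ) : ℝ) := by
    rw [hr]
    simp only [add_zero]
    rw [prod_desc_nat n, Nat.factorial_succ]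
    have hn1 : ((n + 1 : ℕ) : ℝ) ≠ 0 := Nat.cast_ne_zero.mpr (Nat.succ_ne_zero n)
    have hnf : ((n.factorial : ℕ) : ℝ) ≠ 0 := Nat.cast_ne_zero.mpr n.factorial_ne_zero
    push_cast
    field_simp
  calc GG w z (n + 1) (1, 0) = g 0 := rfl
    _ = r 0 := h0
    _ = 1 / ((n + 1 : ℕ) : ℝ) := hr0

theorem stmt8 (κ : ℕ) (hκ : 0 < κ) (u : ℝ) (hu : u ≠ 0) (z : ℝ) :
    Tendsto (fun a : ℝ => meixner κ a⁻¹ (-(κ : ℝ) + 1 - (1 - a) ^ κ / u) z)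
      (𝓝[({0, 1} : Set ℝ)ᶜ] (1 : ℝ))
      (𝓝 ((-1) ^ κ / (κ * u) + poch (z - κ + 1) κ / (Nat.factorial κ))) := by
  have hne : ((κ : ℝ)) ≠ 0 := Nat.cast_ne_zero.mpr hκ.ne'
  have hkf : ((κ.factorial : ℕ) : ℝ) ≠ 0 := Nat.cast_ne_zero.mpr κ.factorial_ne_zero
  have hlim : Tendsto
      (fun a : ℝ => gbinom z κ + ((-1 : ℝ) ^ κ / u) * GG ((κ : ℝ) - 1 - z) z κ (a, (1 - a) ^ κ / u))
      (𝓝 (1 : ℝ))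
      (𝓝 (gbinom z κ + ((-1 : ℝ) ^ κ / u) * GG ((κ : ℝ) - 1 - z) z κ (1, 0))) := by
    have hc : Continuous fun a : ℝ =>
        gbinom z κ + ((-1 : ℝ) ^ κ / u) * GG ((κ : ℝ) - 1 - z) z κ (a, (1 - a) ^ κ / u) := by
      refine continuous_const.add (continuous_const.mul ((GG_cont _ _ _).comp ?_))
      continuity
    have h10 : (1 - (1 : ℝ)) ^ κ / u = 0 := by simp [zero_pow hκ.ne']
    simpa [h10, zero_pow hκ.ne'] using hc.tendsto 1
  have hfin : gbinom z κ + ((-1 : ℝ) ^ κ / u) * GG ((κ : ℝ) - 1 - z) z κ (1, 0)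
      = (-1 : ℝ) ^ κ / (κ * u) + poch (z - κ + 1) κ / κ.factorial := by
    rw [G10 κ hκ z, gbinom_poch]
    field_simp
    ring
  rw [← hfin]
  refine Tendsto.congr' ?_ (hlim.mono_left nhdsWithin_le_nhds)
  filter_upwards [self_mem_nhdsWithin] with a ha
  simp only [Set.mem_compl_iff, Set.mem_insert_iff, Set.mem_singleton_iff, not_or] at ha
  exact (meixner_eq κ u hu z a ha.1 ha.2).symm
end

section
/- Let κ be a positive integer, a > -1, and u > 0. Define P_n^{a,κ;u}(x) = P_n^{a,κ}(x) + [(n+a)(2^{a+κ}(κ-1)! + u(n+1)_κ (n+a+1)_κ)] / [(n+a+κ)(2^{a+κ}(κ-1)! + u(n)_κ (n+a)_κ)] · P_{n-1}^{a,κ}(x), and h_n^{a,b,N;κ}(x) = h_n^{a,b,N}(x) + [(n+a)R_κ^{-b,-a,a+b+N}(θ_{-n-1}^{-a-b})]/[(n+a+b)R_κ^{-b,-a,a+b+N}(θ_{-n}^{-a-b})] · h_{n-1}^{a,b,N}(x). Then for every real x and n ≥ 0, with b = b(N) = κ + 2^{a+κ}/(u N^κ), lim_{N→∞} h_n^{a,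 b(N), N; κ}((1-x)N/2) = P_n^{a,κ;u}(x). -/
open Filter Topology Finset

/-- λ_j^u(y) = ∏_{i=0}^{j-1} (y - i(u+i+1)). -/
noncomputable def lam (j : ℕ) (u y : ℝ) : ℝ :=
  ∏ i ∈ Finset.range j, (y - i * (u + i + 1))

/-- θ_x^u = x(x+u+1). -/
noncomputable def theta (x u : ℝ) : ℝ := x * (x + u + 1)

/-- Dual Hahn polynomial R_n^{a,b,N}(x). -/
noncomputable def dualHahn (n : ℕ) (a b N x : ℝ) : ℝ :=
  ∑ j ∈ Finset.range (n + 1),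
    (poch (-(n : ℝ)) j * poch (-N + j) (n - j) * poch (a + j + 1) (n - j) /
      ((-1) ^ j * (Nat.factorial j))) * lam j (a + b) x

/-- Hahn polynomial h_n^{a,b,N}(x) (hypergeometric form). -/
noncomputable def hahn (n : ℕ) (a b N x : ℝ) : ℝ :=
  (poch (a + 1) n / (Nat.factorial n)) *
    ∑ k ∈ Finset.range (n + 1),
      poch (-(n : ℝ)) k * poch (-x) k * poch ((n : ℝ) + a + b + 1) k /
        (poch (a + 1) k * poch (-N) k * (Nat.factorial k))

/-- Jacobi polynomial P_n^{α,β}(x). -/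
noncomputable def jacobi (n : ℕ) (α β x : ℝ) : ℝ :=
  (∑ j ∈ Finset.range (n + 1),
      gbinom ((n : ℝ) + α) j * gbinom ((n : ℝ) + β) (n - j) * (x - 1) ^ (n - j) * (x + 1) ^ j) /
    2 ^ n

/-- Krall Jacobi polynomial P_n^{a,κ;u}(x). -/
noncomputable def krallJacobi (n : ℕ) (a : ℝ) (κ : ℕ) (u x : ℝ) : ℝ :=
  jacobi n a κ x +
    (((n : ℝ) + a) *
        ((2 : ℝ) ^ (a + κ) * (Nat.factorial (κ - 1)) +
          u * poch ((n : ℝ) + 1) κ * poch ((n : ℝ) + a + 1) κ)) /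
      (((n : ℝ) + a + κ) *
        ((2 : ℝ) ^ (a + κ) * (Nat.factorial (κ - 1)) +
          u * poch (n : ℝ) κ * poch ((n : ℝ) + a) κ)) *
      (if n = 0 then 0 else jacobi (n - 1) a κ x)

/-- Krall Hahn polynomial h_n^{a,b,N;κ}(x). -/
noncomputable def krallHahn (n : ℕ) (a b N : ℝ) (κ : ℕ) (x : ℝ) : ℝ :=
  hahn n a b N x +
    (((n : ℝ) + a) * dualHahn κ (-b) (-a) (a + b + N) (theta (-(n : ℝ) - 1) (-a - b))) /
      (((n : ℝ) + a + b) * dualHahn κ (-b) (-a) (a + b + N) (theta (-(n : ℝ)) (-a - b))) *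
      (if n = 0 then 0 else hahn (n - 1) a b N x)

section Helpers

lemma poch_def (y : ℝ) (k : ℕ) : poch y k = ∏ i ∈ Finset.range k, (y + i) := rfl

lemma poch_pos {y : ℝ} (hy : 0 < y) (k : ℕ) : 0 < poch y k :=
  Finset.prod_pos fun i _ => by have : (0:ℝ) ≤ i := Nat.cast_nonneg i; linarith

lemma poch_nonneg {y : ℝ} (hy : 0 ≤ y) (k : ℕ) : 0 ≤ poch y k :=
  Finset.prod_nonneg fun i _ => by have : (0:ℝ) ≤ i := Nat.cast_nonneg i; linarith

lemma fact_eq_prod : ∀ q : ℕ, ((Nat.factorial q : ℝ)) = ∏ i ∈ Finset.range q, ((q : ℝ) - i)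
  | 0 => by simp
  | (q+1) => by
    rw [Finset.prod_range_succ']
    push_cast
    have h1 : ∀ i ∈ Finset.range q, ((q:ℝ) + 1 - ((i:ℝ) + 1)) = (q:ℝ) - i := by
      intro i _; ring
    rw [Finset.prod_congr rfl h1, ← fact_eq_prod q, Nat.factorial_succ]
    push_cast; ring

/-- reversal: (z+1)(z+2)⋯(z+k) written backwards -/
lemma prod_rev (z : ℝ) : ∀ k : ℕ, ∏ i ∈ Finset.range k, (z + 1 + i) = ∏ i ∈ Finset.range k, (z + k - i)
  | 0 => by simp
  | (k+1) => by
    rw [Finset.prod_range_succ, Finset.prod_range_succ', prod_rev z k]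
    push_cast
    have h1 : ∀ i ∈ Finset.range k, ((z:ℝ) + ((k:ℝ)+1) - ((i:ℝ)+1)) = z + k - i := by
      intro i _; ring
    rw [Finset.prod_congr rfl h1]
    ring

lemma gbinom_def (y : ℝ) (k : ℕ) :
    gbinom y k = (∏ i ∈ Finset.range k, (y - i)) / (Nat.factorial k) := rfl

lemma gbinom_succ_mul (y : ℝ) (k : ℕ) :
    ((k:ℝ)+1) * gbinom y (k+1) = (y - k) * gbinom y k := by
  rw [gbinom_def, gbinom_def, Finset.prod_range_succ, Nat.factorial_succ]
  have hk : ((Nat.factorial k : ℝ)) ≠ 0 := Nat.cast_ne_zero.mpr (Nat.factorial_ne_zero k)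
  have hk1 : ((k:ℝ)+1) ≠ 0 := by positivity
  field_simp
  push_cast; ring

end Helpers
section Vandermonde

lemma gbinom_zero (y : ℝ) : gbinom y 0 = 1 := by simp [gbinom_def]

/-- Chu–Vandermonde identity for generalized binomial coefficients. -/
lemma gbinom_add (X Y : ℝ) : ∀ s : ℕ,
    ∑ k ∈ Finset.range (s+1), gbinom X k * gbinom Y (s-k) = gbinom (X+Y) s
  | 0 => by simp [gbinom_zero]
  | (s+1) => by
    have hs1 : ((s:ℝ)+1) ≠ 0 := by positivity
    apply mul_left_cancel₀ hs1
    rw [gbinom_succ_mul (X+Y) s, ← gbinom_add X Y s, Finset.mul_sum]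
    have split : ∀ k ∈ Finset.range (s+2),
        ((s:ℝ)+1) * (gbinom X k * gbinom Y (s+1-k)) =
          (k:ℝ) * gbinom X k * gbinom Y (s+1-k)
            + gbinom X k * (((s+1-k : ℕ):ℝ) * gbinom Y (s+1-k)) := by
      intro k hk
      have hk' : k ≤ s+1 := Nat.lt_succ_iff.mp (Finset.mem_range.mp hk)
      have : ((s+1-k : ℕ):ℝ) = (s:ℝ)+1-(k:ℝ) := by
        push_cast [Nat.cast_sub hk']; ring
      rw [this]; ring
    rw [Finset.sum_congr rfl split, Finset.sum_add_distrib]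
    have hA : ∑ k ∈ Finset.range (s+2), (k:ℝ) * gbinom X k * gbinom Y (s+1-k)
        = ∑ k ∈ Finset.range (s+1), (X - k) * gbinom X k * gbinom Y (s-k) := by
      rw [Finset.sum_range_succ']
      simp only [Nat.cast_zero, zero_mul]
      rw [add_zero]
      refine Finset.sum_congr rfl ?_
      intro k hk
      have h1 : s + 1 - (k+1) = s - k := by omega
      have h2 : ((k:ℝ)+1) * gbinom X (k+1) = (X - k) * gbinom X k := gbinom_succ_mul X k
      rw [h1]
      push_cast
      rw [mul_assoc, ← mul_assoc ((k:ℝ)+1), h2, mul_assoc]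
    have hB : ∑ k ∈ Finset.range (s+2), gbinom X k * (((s+1-k : ℕ):ℝ) * gbinom Y (s+1-k))
        = ∑ k ∈ Finset.range (s+1), gbinom X k * ((Y - ((s:ℝ)-k)) * gbinom Y (s-k)) := by
      rw [Finset.sum_range_succ]
      simp only [Nat.sub_self, Nat.cast_zero, zero_mul, mul_zero, add_zero]
      refine Finset.sum_congr rfl ?_
      intro k hk
      have hk' : k ≤ s := Nat.lt_succ_iff.mp (Finset.mem_range.mp hk)
      have h1 : s + 1 - k = (s - k) + 1 := by omega
      rw [h1]
      have h2 : (((s-k : ℕ):ℝ)+1) * gbinom Y ((s-k)+1) = (Y - ((s-k:ℕ):ℝ)) * gbinom Y (s-k) :=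
        gbinom_succ_mul Y (s-k)
      have h3 : ((s-k:ℕ):ℝ) = (s:ℝ)-(k:ℝ) := Nat.cast_sub hk'
      push_cast [h3] at h2 ⊢
      rw [h2]
    rw [hA, hB, ← Finset.sum_add_distrib, Finset.mul_sum]
    apply Finset.sum_congr rfl
    intro k hk
    ring

end Vandermonde
section JacobiHyp

lemma gbinom_choose_split {m k j : ℕ} (hjk : j ≤ k) (hkm : k ≤ m) (α : ℝ) :
    gbinom ((m:ℝ)+α) (m-j) * (((m-j).choose (k-j) : ℕ) : ℝ)
      = gbinom ((m:ℝ)+α) (m-k) * gbinom (α+(k:ℝ)) (k-j) := by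
  have hsplit : m - j = (m-k) + (k-j) := by omega
  have hprod : ∏ i ∈ Finset.range (m-j), ((m:ℝ)+α-i)
      = (∏ i ∈ Finset.range (m-k), ((m:ℝ)+α-i)) * ∏ i ∈ Finset.range (k-j), (α+(k:ℝ)-i) := by
    rw [hsplit, Finset.prod_range_add]
    congr 1
    apply Finset.prod_congr rfl
    intro i hi
    have h1 : ((m-k+i : ℕ):ℝ) = (m:ℝ)-(k:ℝ)+i := by
      push_cast [Nat.cast_sub hkm]; ring
    rw [h1]; ring
  have hfac : (((m-j).choose (k-j) : ℕ) : ℝ) * ((k-j).factorial : ℝ) * ((m-k).factorial : ℝ)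
      = ((m-j).factorial : ℝ) := by
    have h := Nat.choose_mul_factorial_mul_factorial (show k-j ≤ m-j by omega)
    have h2 : m - j - (k-j) = m - k := by omega
    rw [h2] at h
    exact_mod_cast congrArg (fun t : ℕ => (t:ℝ)) h
  have hC : (((m-j).choose (k-j) : ℕ) : ℝ) / ((m-j).factorial : ℝ)
      = 1/(((k-j).factorial : ℝ) * ((m-k).factorial:ℝ)) := by
    rw [div_eq_div_iff (by positivity) (by positivity)]
    linear_combination hfac
  rw [gbinom_def, gbinom_def, gbinom_def, hprod]
  calc ((∏ i ∈ Finset.range (m-k), ((m:ℝ)+α-i)) * ∏ i ∈ Finset.range (k-j), (α+(k:ℝ)-i))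
        / ((m-j).factorial : ℝ) * (((m-j).choose (k-j) : ℕ) : ℝ)
      = ((∏ i ∈ Finset.range (m-k), ((m:ℝ)+α-i)) * ∏ i ∈ Finset.range (k-j), (α+(k:ℝ)-i))
        * ((((m-j).choose (k-j) : ℕ) : ℝ) / ((m-j).factorial : ℝ)) := by ring
    _ = ((∏ i ∈ Finset.range (m-k), ((m:ℝ)+α-i)) * ∏ i ∈ Finset.range (k-j), (α+(k:ℝ)-i))
        * (1/(((k-j).factorial : ℝ) * ((m-k).factorial:ℝ))) := by rw [hC]
    _ = (∏ i ∈ Finset.range (m-k), ((m:ℝ)+α-i)) / ((m-k).factorial : ℝ)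
        * ((∏ i ∈ Finset.range (k-j), (α+(k:ℝ)-i)) / ((k-j).factorial : ℝ)) := by ring

lemma inner_vandermonde (m k : ℕ) (hkm : k ≤ m) (α β : ℝ) :
    ∑ j ∈ Finset.range (k+1),
        gbinom ((m:ℝ)+α) (m-j) * gbinom ((m:ℝ)+β) j * (((m-j).choose (k-j) : ℕ) : ℝ)
      = gbinom ((m:ℝ)+α) (m-k) * (poch ((m:ℝ)+α+β+1) k / (Nat.factorial k : ℝ)) := by
  have h1 : ∀ j ∈ Finset.range (k+1),
      gbinom ((m:ℝ)+α) (m-j) * gbinom ((m:ℝ)+β) j * (((m-j).choose (k-j) : ℕ) : ℝ)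
        = gbinom ((m:ℝ)+α) (m-k) * (gbinom ((m:ℝ)+β) j * gbinom (α+(k:ℝ)) (k-j)) := by
    intro j hj
    have hjk : j ≤ k := Nat.lt_succ_iff.mp (Finset.mem_range.mp hj)
    rw [show gbinom ((m:ℝ)+α) (m-j) * gbinom ((m:ℝ)+β) j * (((m-j).choose (k-j) : ℕ) : ℝ)
        = gbinom ((m:ℝ)+α) (m-j) * (((m-j).choose (k-j) : ℕ) : ℝ) * gbinom ((m:ℝ)+β) j by ring,
      gbinom_choose_split hjk hkm α]
    ring
  rw [Finset.sum_congr rfl h1, ← Finset.mul_sum, gbinom_add ((m:ℝ)+β) (α+(k:ℝ)) k]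
  congr 1
  rw [gbinom_def, poch_def, prod_rev ((m:ℝ)+α+β) k]
  congr 1
  apply Finset.prod_congr rfl
  intro i hi
  ring

lemma jacobi_hyp (m : ℕ) (α β x : ℝ) :
    jacobi m α β x = ∑ k ∈ Finset.range (m+1),
      gbinom ((m:ℝ)+α) (m-k) * poch ((m:ℝ)+α+β+1) k * ((x-1)/2)^k / (Nat.factorial k : ℝ) := by
  set s : ℝ := (x-1)/2 with hs
  have hx1 : x - 1 = 2*s := by rw [hs]; ring
  have hx2 : x + 1 = 2*(1+s) := by rw [hs]; ring
  have h2m : ((2:ℝ)^m) ≠ 0 := by positivity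
  have stepA : jacobi m α β x
      = ∑ j ∈ Finset.range (m+1),
          gbinom ((m:ℝ)+α) j * gbinom ((m:ℝ)+β) (m-j) * s^(m-j) * (1+s)^j := by
    unfold jacobi
    rw [div_eq_iff h2m, Finset.sum_mul]
    apply Finset.sum_congr rfl
    intro j hj
    have hj' : j ≤ m := Nat.lt_succ_iff.mp (Finset.mem_range.mp hj)
    rw [hx1, hx2, mul_pow, mul_pow]
    have : (2:ℝ)^(m-j) * (2:ℝ)^j = 2^m := by
      rw [← pow_add, Nat.sub_add_cancel hj']
    calc gbinom ((m:ℝ)+α) j * gbinom ((m:ℝ)+β) (m-j) * ((2:ℝ)^(m-j) * s^(m-j)) * ((2:ℝ)^j * (1+s)^j)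
        = gbinom ((m:ℝ)+α) j * gbinom ((m:ℝ)+β) (m-j) * s^(m-j) * (1+s)^j * ((2:ℝ)^(m-j) * (2:ℝ)^j) := by ring
      _ = gbinom ((m:ℝ)+α) j * gbinom ((m:ℝ)+β) (m-j) * s^(m-j) * (1+s)^j * (2:ℝ)^m := by rw [this]
  have stepB : (∑ j ∈ Finset.range (m+1),
          gbinom ((m:ℝ)+α) j * gbinom ((m:ℝ)+β) (m-j) * s^(m-j) * (1+s)^j)
      = ∑ j ∈ Finset.range (m+1),
          gbinom ((m:ℝ)+α) (m-j) * gbinom ((m:ℝ)+β) j * s^j * (1+s)^(m-j) := by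
    rw [← Finset.sum_range_reflect
      (fun j => gbinom ((m:ℝ)+α) (m-j) * gbinom ((m:ℝ)+β) j * s^j * (1+s)^(m-j)) (m+1)]
    apply Finset.sum_congr rfl
    intro j hj
    have hj' : j ≤ m := Nat.lt_succ_iff.mp (Finset.mem_range.mp hj)
    have e1 : m + 1 - 1 - j = m - j := by omega
    have e2 : m - (m - j) = j := by omega
    rw [e1, e2]
  set H : ℕ → ℕ → ℝ := fun j i =>
    gbinom ((m:ℝ)+α) (m-j) * gbinom ((m:ℝ)+β) j * (((m-j).choose i : ℕ) : ℝ) * s^(j+i) with hH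
  have stepC : (∑ j ∈ Finset.range (m+1),
          gbinom ((m:ℝ)+α) (m-j) * gbinom ((m:ℝ)+β) j * s^j * (1+s)^(m-j))
      = ∑ j ∈ Finset.range (m+1), ∑ i ∈ Finset.range ((m+1)-j), H j i := by
    apply Finset.sum_congr rfl
    intro j hj
    have hj' : j ≤ m := Nat.lt_succ_iff.mp (Finset.mem_range.mp hj)
    have e1 : (m+1) - j = (m-j) + 1 := by omega
    rw [e1, show (1+s) = s + 1 by ring, add_pow]
    rw [Finset.mul_sum]
    apply Finset.sum_congr rfl
    intro i hi
    rw [hH]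
    simp only [one_pow, mul_one, pow_add]
    ring
  have stepD : (∑ j ∈ Finset.range (m+1), ∑ i ∈ Finset.range ((m+1)-j), H j i)
      = ∑ k ∈ Finset.range (m+1), ∑ j ∈ Finset.range (k+1), H j (k-j) :=
    (Finset.sum_range_diag_flip (m+1) H).symm
  rw [stepA, stepB, stepC, stepD]
  apply Finset.sum_congr rfl
  intro k hk
  have hkm : k ≤ m := Nat.lt_succ_iff.mp (Finset.mem_range.mp hk)
  have hinner : ∀ j ∈ Finset.range (k+1), H j (k-j)
      = gbinom ((m:ℝ)+α) (m-j) * gbinom ((m:ℝ)+β) j * (((m-j).choose (k-j) : ℕ) : ℝ) * s^k := by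
    intro j hj
    have hjk : j ≤ k := Nat.lt_succ_iff.mp (Finset.mem_range.mp hj)
    simp only [hH]
    have : j + (k - j) = k := by omega
    rw [this]
  rw [Finset.sum_congr rfl hinner, ← Finset.sum_mul, inner_vandermonde m k hkm α β]
  rw [hs]
  ring

end JacobiHyp
section JacobiS

lemma poch_neg_nat (m k : ℕ) :
    poch (-(m:ℝ)) k = (-1)^k * ∏ i ∈ Finset.range k, ((m:ℝ)-i) := by
  rw [poch_def]
  calc ∏ i ∈ Finset.range k, (-(m:ℝ) + i)
      = ∏ i ∈ Finset.range k, ((-1) * ((m:ℝ) - i)) := by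
        apply Finset.prod_congr rfl; intro i hi; ring
    _ = (∏ _i ∈ Finset.range k, (-1:ℝ)) * ∏ i ∈ Finset.range k, ((m:ℝ)-i) :=
        Finset.prod_mul_distrib
    _ = (-1)^k * ∏ i ∈ Finset.range k, ((m:ℝ)-i) := by
        rw [Finset.prod_const, Finset.card_range]

lemma fact_split (m k : ℕ) (hkm : k ≤ m) :
    (∏ i ∈ Finset.range k, ((m:ℝ)-i)) * ((m-k).factorial : ℝ) = (m.factorial : ℝ) := by
  have hadd := Finset.prod_range_add (fun i : ℕ => ((m:ℝ)-(i:ℕ))) k (m-k)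
  rw [show k + (m-k) = m by omega] at hadd
  have h1 : ∀ i ∈ Finset.range (m-k), ((m:ℝ) - ((k+i : ℕ):ℝ)) = ((m-k : ℕ):ℝ) - (i:ℝ) := by
    intro i hi; push_cast [Nat.cast_sub hkm]; ring
  rw [fact_eq_prod m, hadd, Finset.prod_congr rfl h1, ← fact_eq_prod (m-k)]

lemma poch_split (z : ℝ) (m k : ℕ) (hkm : k ≤ m) :
    poch z m = poch z k * poch (z + k) (m-k) := by
  have hadd := Finset.prod_range_add (fun i : ℕ => (z+(i:ℕ))) k (m-k)
  rw [show k + (m-k) = m by omega] at hadd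
  rw [poch_def, hadd, poch_def, poch_def]
  congr 1
  apply Finset.prod_congr rfl
  intro i hi
  push_cast
  ring

lemma gbinom_eq_poch (m k : ℕ) (hkm : k ≤ m) (α : ℝ) :
    gbinom ((m:ℝ)+α) (m-k) = poch (α+1+(k:ℝ)) (m-k) / ((m-k).factorial : ℝ) := by
  rw [gbinom_def]
  congr 1
  rw [poch_def]
  have : ∀ i ∈ Finset.range (m-k), (α+1+(k:ℝ)) + (i:ℝ) = (α+(k:ℝ)) + 1 + i := by
    intro i hi; ring
  rw [Finset.prod_congr rfl this, prod_rev (α+(k:ℝ)) (m-k)]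
  apply Finset.prod_congr rfl
  intro i hi
  have : ((m-k : ℕ):ℝ) = (m:ℝ) - k := Nat.cast_sub hkm
  rw [this]
  ring

lemma jacobi_eq_S (m : ℕ) (α β x : ℝ) (hα : -1 < α) :
    poch (α+1) m / (Nat.factorial m : ℝ) * ∑ k ∈ Finset.range (m+1),
      poch (-(m:ℝ)) k * poch ((m:ℝ)+α+β+1) k * ((1-x)/2)^k / (poch (α+1) k * (Nat.factorial k : ℝ))
    = jacobi m α β x := by
  rw [jacobi_hyp m α β x, Finset.mul_sum]
  apply Finset.sum_congr rfl
  intro k hk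
  have hkm : k ≤ m := Nat.lt_succ_iff.mp (Finset.mem_range.mp hk)
  have hα1 : (0:ℝ) < α + 1 := by linarith
  have hp1 : poch (α+1) k ≠ 0 := ne_of_gt (poch_pos hα1 k)
  have hD : (∏ i ∈ Finset.range k, ((m:ℝ)-i)) ≠ 0 := by
    apply Finset.prod_ne_zero_iff.mpr
    intro i hi
    have : i < m := lt_of_lt_of_le (Finset.mem_range.mp hi) hkm
    have : (i:ℝ) < m := by exact_mod_cast this
    linarith
  have hfk : ((Nat.factorial k : ℝ)) ≠ 0 := by positivity
  have hfmk : (((m-k).factorial : ℝ)) ≠ 0 := by positivity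
  have f5 : ((x-1)/2)^k = (-1)^k * ((1-x)/2)^k := by
    rw [← mul_pow]
    congr 1
    ring
  rw [gbinom_eq_poch m k hkm α, poch_split (α+1) m k hkm, poch_neg_nat m k, f5,
    ← fact_split m k hkm]
  have : α + 1 + (k:ℝ) = α + 1 + (k:ℝ) := rfl
  field_simp

end JacobiS
section Tendsto1

variable {κ : ℕ} {a u c x : ℝ}

lemma tendsto_eps (hκ : 0 < κ) (hu : 0 < u) (c : ℝ) :
    Tendsto (fun N : ℝ => c/(u*N^κ)) atTop (𝓝 0) := by
  have h1 : Tendsto (fun N : ℝ => u*N^κ) atTop atTop :=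
    (tendsto_pow_atTop hκ.ne').const_mul_atTop hu
  exact Tendsto.div_atTop tendsto_const_nhds h1

lemma tendsto_b (hκ : 0 < κ) (hu : 0 < u) (c : ℝ) :
    Tendsto (fun N : ℝ => (κ:ℝ) + c/(u*N^κ)) atTop (𝓝 (κ:ℝ)) := by
  have := tendsto_const_nhds.add (tendsto_eps hκ hu c) (f := fun _ : ℝ => (κ:ℝ)) (x := atTop)
  simpa using this

lemma tendsto_poch_ratio (x : ℝ) (k : ℕ) :
    Tendsto (fun N : ℝ => poch (-((1-x)*N/2)) k / poch (-N) k) atTop (𝓝 (((1-x)/2)^k)) := by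
  have hfac : ∀ i : ℕ,
      Tendsto (fun N : ℝ => (-((1-x)*N/2) + (i:ℝ))/(-N + (i:ℝ))) atTop (𝓝 ((1-x)/2)) := by
    intro i
    have hev : (fun N : ℝ => (-((1-x)/2) + (i:ℝ)/N)/(-1 + (i:ℝ)/N))
        =ᶠ[atTop] (fun N : ℝ => (-((1-x)*N/2) + (i:ℝ))/(-N + (i:ℝ))) := by
      filter_upwards [eventually_gt_atTop (0:ℝ)] with N hN
      have hN0 : N ≠ 0 := ne_of_gt hN
      have e1 : (-((1-x)*N/2) + (i:ℝ)) = N * (-((1-x)/2) + (i:ℝ)/N) := by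
        field_simp
      have e2 : (-N + (i:ℝ)) = N * (-1 + (i:ℝ)/N) := by
        field_simp
      rw [e1, e2, mul_div_mul_left _ _ hN0]
    have h1 : Tendsto (fun N : ℝ => (i:ℝ)/N) atTop (𝓝 0) :=
      Tendsto.div_atTop tendsto_const_nhds tendsto_id
    have hnum : Tendsto (fun N : ℝ => -((1-x)/2) + (i:ℝ)/N) atTop (𝓝 (-((1-x)/2) + 0)) :=
      tendsto_const_nhds.add h1
    have hden : Tendsto (fun N : ℝ => -1 + (i:ℝ)/N) atTop (𝓝 (-1 + 0)) :=
      tendsto_const_nhds.add h1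
    have hq := hnum.div hden (by norm_num)
    have hval : (-((1-x)/2) + 0) / (-1 + 0 : ℝ) = (1-x)/2 := by norm_num
    rw [hval] at hq
    exact Tendsto.congr' hev hq
  have hprodeq : ∀ N : ℝ, poch (-((1-x)*N/2)) k / poch (-N) k
      = ∏ i ∈ Finset.range k, ((-((1-x)*N/2) + (i:ℝ))/(-N + (i:ℝ))) := by
    intro N
    rw [poch_def, poch_def, ← Finset.prod_div_distrib]
  have hp := tendsto_finset_prod (Finset.range k)
    (f := fun (i:ℕ) (N:ℝ) => (-((1-x)*N/2) + (i:ℝ))/(-N + (i:ℝ)))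
    (a := fun _ => (1-x)/2) (fun i _ => hfac i)
  rw [Finset.prod_const, Finset.card_range] at hp
  exact Tendsto.congr (fun N => (hprodeq N).symm) hp

lemma hahn_tendsto (hκ : 0 < κ) (ha : -1 < a) (hu : 0 < u) (c : ℝ) (x : ℝ) (m : ℕ) :
    Tendsto (fun N : ℝ => hahn m a ((κ:ℝ) + c/(u*N^κ)) N ((1-x)*N/2)) atTop
      (𝓝 (jacobi m a (κ:ℝ) x)) := by
  have hb := tendsto_b hκ hu c
  have hterm : ∀ k ∈ Finset.range (m+1),
      Tendsto (fun N : ℝ =>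
          poch (-(m:ℝ)) k * poch (-((1-x)*N/2)) k *
            poch ((m:ℝ) + a + ((κ:ℝ) + c/(u*N^κ)) + 1) k /
          (poch (a+1) k * poch (-N) k * (Nat.factorial k : ℝ)))
        atTop
        (𝓝 ((poch (-(m:ℝ)) k * poch ((m:ℝ) + a + (κ:ℝ) + 1) k /
            (poch (a+1) k * (Nat.factorial k : ℝ))) * ((1-x)/2)^k)) := by
    intro k hk
    have h1 : Tendsto (fun N : ℝ => poch ((m:ℝ) + a + ((κ:ℝ) + c/(u*N^κ)) + 1) k) atTop
        (𝓝 (poch ((m:ℝ) + a + (κ:ℝ) + 1) k)) := by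
      have hfac : ∀ i : ℕ,
          Tendsto (fun N : ℝ => (m:ℝ) + a + ((κ:ℝ) + c/(u*N^κ)) + 1 + (i:ℝ)) atTop
            (𝓝 ((m:ℝ) + a + (κ:ℝ) + 1 + (i:ℝ))) := by
        intro i
        exact (((tendsto_const_nhds.add hb).add_const 1).add_const (i:ℝ)).comp tendsto_id |>.congr
          (fun N => by simp)
      have hp := tendsto_finset_prod (Finset.range k)
        (f := fun (i:ℕ) (N:ℝ) => (m:ℝ) + a + ((κ:ℝ) + c/(u*N^κ)) + 1 + (i:ℝ))
        (a := fun i => (m:ℝ) + a + (κ:ℝ) + 1 + (i:ℝ)) (fun i _ => hfac i)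
      rw [← poch_def] at hp
      exact Tendsto.congr (fun N => by rw [← poch_def]) hp
    have h2 := tendsto_poch_ratio x k
    have heq : ∀ N : ℝ,
        poch (-(m:ℝ)) k * poch (-((1-x)*N/2)) k *
            poch ((m:ℝ) + a + ((κ:ℝ) + c/(u*N^κ)) + 1) k /
          (poch (a+1) k * poch (-N) k * (Nat.factorial k : ℝ))
        = (poch (-(m:ℝ)) k * poch ((m:ℝ) + a + ((κ:ℝ) + c/(u*N^κ)) + 1) k /
            (poch (a+1) k * (Nat.factorial k : ℝ)))
          * (poch (-((1-x)*N/2)) k / poch (-N) k) := by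
      intro N; ring
    have hc0 : Tendsto (fun _ : ℝ => poch (-(m:ℝ)) k) atTop (𝓝 (poch (-(m:ℝ)) k)) :=
      tendsto_const_nhds
    have hmain := (((hc0.mul h1).div_const (poch (a+1) k * (Nat.factorial k : ℝ))).mul h2)
    exact Tendsto.congr (fun N => (heq N).symm) hmain
  have hsum := tendsto_finset_sum (Finset.range (m+1)) hterm
  have hfin := hsum.const_mul (poch (a+1) m / (Nat.factorial m : ℝ))
  have hval : (poch (a+1) m / (Nat.factorial m : ℝ)) *
      (∑ k ∈ Finset.range (m+1),
        (poch (-(m:ℝ)) k * poch ((m:ℝ) + a + (κ:ℝ) + 1) k /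
            (poch (a+1) k * (Nat.factorial k : ℝ))) * ((1-x)/2)^k)
      = jacobi m a (κ:ℝ) x := by
    rw [← jacobi_eq_S m a (κ:ℝ) x ha]
    congr 1
    apply Finset.sum_congr rfl
    intro k hk
    ring
  rw [hval] at hfin
  apply Tendsto.congr _ hfin
  intro N
  simp only [hahn, Finset.mul_sum]

end Tendsto1
section Tendsto2

variable {κ : ℕ} {a u c t : ℝ}

lemma poch_zero (y : ℝ) : poch y 0 = 1 := by simp [poch_def]

lemma poch_succ (y : ℝ) (q : ℕ) : poch y (q+1) = poch y q * (y + q) := by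
  rw [poch_def, poch_def, Finset.prod_range_succ]

lemma poch_neg_self (κ : ℕ) : poch (-(κ:ℝ)) κ = (-1)^κ * ((Nat.factorial κ : ℕ):ℝ) := by
  rw [poch_neg_nat, ← fact_eq_prod]

lemma lam_def (j : ℕ) (U y : ℝ) : lam j U y = ∏ i ∈ Finset.range j, (y - i * (U + i + 1)) := rfl

lemma lam_kappa (κ : ℕ) (a t : ℝ) :
    lam κ (-(κ:ℝ) + -a) (theta (-t) (-a - (κ:ℝ))) = poch t κ * poch (t+a) κ := by
  rw [lam_def]
  have h1 : ∀ i ∈ Finset.range κ,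
      theta (-t) (-a - (κ:ℝ)) - (i:ℝ) * ((-(κ:ℝ) + -a) + i + 1)
        = (t + (i:ℝ)) * ((t + a - 1) + ((κ:ℕ):ℝ) - (i:ℝ)) := by
    intro i hi
    simp only [theta]
    ring
  rw [Finset.prod_congr rfl h1, Finset.prod_mul_distrib, ← prod_rev (t+a-1) κ,
    poch_def, poch_def]
  congr 1
  exact Finset.prod_congr rfl (fun i _ => by ring)

lemma tendsto_lam (hκ : 0 < κ) (hu : 0 < u) (a c t : ℝ) (j : ℕ) :
    Tendsto (fun N : ℝ => lam j (-((κ:ℝ) + c/(u*N^κ)) + -a)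
        (theta (-t) (-a - ((κ:ℝ) + c/(u*N^κ))))) atTop
      (𝓝 (lam j (-(κ:ℝ) + -a) (theta (-t) (-a - (κ:ℝ))))) := by
  have hb := tendsto_b hκ hu c
  have hU : Tendsto (fun N : ℝ => -((κ:ℝ) + c/(u*N^κ)) + -a) atTop (𝓝 (-(κ:ℝ) + -a)) :=
    hb.neg.add_const (-a)
  have hy : Tendsto (fun N : ℝ => theta (-t) (-a - ((κ:ℝ) + c/(u*N^κ)))) atTop
      (𝓝 (theta (-t) (-a - (κ:ℝ)))) := by
    have h : Tendsto (fun N : ℝ => -a - ((κ:ℝ) + c/(u*N^κ))) atTop (𝓝 (-a - (κ:ℝ))) :=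
      tendsto_const_nhds.sub hb
    simp only [theta]
    exact ((h.const_add (-t)).add_const 1).const_mul (-t)
  have hfac : ∀ i : ℕ,
      Tendsto (fun N : ℝ => theta (-t) (-a - ((κ:ℝ) + c/(u*N^κ)))
          - (i:ℝ) * ((-((κ:ℝ) + c/(u*N^κ)) + -a) + i + 1)) atTop
        (𝓝 (theta (-t) (-a - (κ:ℝ)) - (i:ℝ) * ((-(κ:ℝ) + -a) + i + 1))) := by
    intro i
    exact hy.sub ((((hU.add_const (i:ℝ)).add_const 1)).const_mul (i:ℝ))
  have hp := tendsto_finset_prod (Finset.range j)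
    (f := fun (i:ℕ) (N:ℝ) => theta (-t) (-a - ((κ:ℝ) + c/(u*N^κ)))
        - (i:ℝ) * ((-((κ:ℝ) + c/(u*N^κ)) + -a) + i + 1))
    (a := fun i => theta (-t) (-a - (κ:ℝ)) - (i:ℝ) * ((-(κ:ℝ) + -a) + i + 1))
    (fun i _ => hfac i)
  rw [← lam_def] at hp
  exact Tendsto.congr (fun N => (lam_def _ _ _).symm) hp

lemma tendsto_P1 (hκ : 0 < κ) (hu : 0 < u) (a c : ℝ) (j q : ℕ) :
    Tendsto (fun N : ℝ =>
        poch (-(a + ((κ:ℝ) + c/(u*N^κ)) + N) + (j:ℝ)) q / N^q) atTop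
      (𝓝 ((-1:ℝ)^q)) := by
  have hu' : u ≠ 0 := ne_of_gt hu
  have hfac : ∀ i : ℕ,
      Tendsto (fun N : ℝ => (-(a + ((κ:ℝ) + c/(u*N^κ)) + N) + (j:ℝ) + (i:ℝ))/N) atTop
        (𝓝 (-1)) := by
    intro i
    have heps : Tendsto (fun N : ℝ => (c/(u*N^κ))/N) atTop (𝓝 0) := by
      have h1 := (tendsto_eps hκ hu c).mul tendsto_inv_atTop_zero
      have h2 : (fun N : ℝ => (c/(u*N^κ)) * N⁻¹) = fun N : ℝ => (c/(u*N^κ))/N := by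
        funext N; exact (div_eq_mul_inv _ _).symm
      rw [h2] at h1
      simpa using h1
    have hconst : Tendsto (fun N : ℝ => (-a - (κ:ℝ) + (j:ℝ) + (i:ℝ))/N) atTop (𝓝 0) :=
      Tendsto.div_atTop tendsto_const_nhds tendsto_id
    have hsimp := (hconst.sub heps).sub_const 1
    have h0 : (0:ℝ) - 0 - 1 = -1 := by norm_num
    rw [h0] at hsimp
    apply Tendsto.congr' _ hsimp
    filter_upwards [eventually_gt_atTop (0:ℝ)] with N hN
    have hN0 : N ≠ 0 := ne_of_gt hN
    have hNκ : N^κ ≠ 0 := pow_ne_zero _ hN0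
    field_simp
    ring
  have hprodeq : ∀ N : ℝ,
      poch (-(a + ((κ:ℝ) + c/(u*N^κ)) + N) + (j:ℝ)) q / N^q
        = ∏ i ∈ Finset.range q, ((-(a + ((κ:ℝ) + c/(u*N^κ)) + N) + (j:ℝ) + (i:ℝ))/N) := by
    intro N
    rw [poch_def, Finset.prod_div_distrib, Finset.prod_const, Finset.card_range]
  have hp := tendsto_finset_prod (Finset.range q)
    (f := fun (i:ℕ) (N:ℝ) => (-(a + ((κ:ℝ) + c/(u*N^κ)) + N) + (j:ℝ) + (i:ℝ))/N)
    (a := fun _ => (-1:ℝ)) (fun i _ => hfac i)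
  rw [Finset.prod_const, Finset.card_range] at hp
  exact Tendsto.congr (fun N => (hprodeq N).symm) hp

lemma tendsto_P2' (hκ : 0 < κ) (hu : 0 < u) (c : ℝ) (j q : ℕ) :
    Tendsto (fun N : ℝ => poch (-((κ:ℝ) + c/(u*N^κ)) + (j:ℝ) + 1) q) atTop
      (𝓝 (poch (-(κ:ℝ) + (j:ℝ) + 1) q)) := by
  have hb := tendsto_b hκ hu c
  have hfac : ∀ i : ℕ,
      Tendsto (fun N : ℝ => -((κ:ℝ) + c/(u*N^κ)) + (j:ℝ) + 1 + (i:ℝ)) atTop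
        (𝓝 (-(κ:ℝ) + (j:ℝ) + 1 + (i:ℝ))) := by
    intro i
    exact ((hb.neg.add_const (j:ℝ)).add_const 1).add_const (i:ℝ)
  have hp := tendsto_finset_prod (Finset.range q)
    (f := fun (i:ℕ) (N:ℝ) => -((κ:ℝ) + c/(u*N^κ)) + (j:ℝ) + 1 + (i:ℝ))
    (a := fun i => -(κ:ℝ) + (j:ℝ) + 1 + (i:ℝ)) (fun i _ => hfac i)
  rw [← poch_def] at hp
  exact Tendsto.congr (fun N => by rw [← poch_def]) hp

end Tendsto2
section Tendsto3

variable {κ : ℕ} {u : ℝ}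

lemma lam_zero (U y : ℝ) : lam 0 U y = 1 := by simp [lam_def]

lemma dual_term_tendsto (hκ : 0 < κ) (hu : 0 < u) (a c t : ℝ) {j : ℕ} (hj : j ≤ κ) :
    Tendsto (fun N : ℝ =>
      poch (-(κ:ℝ)) j * poch (-(a + ((κ:ℝ) + c/(u*N^κ)) + N) + (j:ℝ)) (κ-j) *
        poch (-((κ:ℝ) + c/(u*N^κ)) + (j:ℝ) + 1) (κ-j) / ((-1)^j * (Nat.factorial j : ℝ)) *
        lam j (-((κ:ℝ) + c/(u*N^κ)) + -a) (theta (-t) (-a - ((κ:ℝ) + c/(u*N^κ)))))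
      atTop (𝓝 (if j = κ then poch t κ * poch (t+a) κ
        else if j = 0 then c*((Nat.factorial (κ-1) : ℕ):ℝ)/u else 0)) := by
  have hu' : u ≠ 0 := ne_of_gt hu
  have hlam := tendsto_lam hκ hu a c t j
  rcases eq_or_lt_of_le hj with rfl | hjκ
  · -- j = κ
    simp only [Nat.sub_self, poch_zero, mul_one, if_pos]
    have hne : ((-1:ℝ)^j * (Nat.factorial j : ℝ)) ≠ 0 := by
      apply mul_ne_zero
      · exact pow_ne_zero _ (by norm_num)
      · positivity
    have hconst : poch (-(j:ℝ)) j / ((-1)^j * (Nat.factorial j : ℝ)) = 1 := by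
      rw [poch_neg_self j, div_self hne]
    have h2 := hlam
    rw [lam_kappa j a t] at h2
    have h3 : Tendsto (fun _ : ℝ => poch (-(j:ℝ)) j / ((-1:ℝ)^j * (Nat.factorial j : ℝ)))
        atTop (𝓝 (poch (-(j:ℝ)) j / ((-1:ℝ)^j * (Nat.factorial j : ℝ)))) := tendsto_const_nhds
    have h4 := h3.mul h2
    rw [hconst, one_mul] at h4
    apply Tendsto.congr _ h4
    intro N
    rw [hconst, one_mul]
  · -- j < κ
    set q : ℕ := κ - j - 1 with hqdef
    have hq : κ - j = q + 1 := by omega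
    have hcast : ((q : ℕ) : ℝ) = (κ:ℝ) - j - 1 := by
      have h1 : (q : ℕ) = κ - (j+1) := by omega
      rw [h1, Nat.cast_sub (by omega)]
      push_cast
      ring
    have hP1 := tendsto_P1 hκ hu a c j (κ-j)
    have hP2' := tendsto_P2' hκ hu c j q
    -- limit of -c/(u*N^j)
    have hW : Tendsto (fun N : ℝ => -c/(u*N^j)) atTop
        (𝓝 (if j = 0 then -c/u else 0)) := by
      by_cases hj0 : j = 0
      · subst hj0
        simp only [pow_zero, mul_one, if_pos]
        exact tendsto_const_nhds
      · rw [if_neg hj0]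
        exact tendsto_eps (Nat.pos_of_ne_zero hj0) hu (-c)
    have hD : Tendsto (fun _ : ℝ => poch (-(κ:ℝ)) j / ((-1:ℝ)^j * (Nat.factorial j : ℝ)))
        atTop (𝓝 (poch (-(κ:ℝ)) j / ((-1:ℝ)^j * (Nat.factorial j : ℝ)))) := tendsto_const_nhds
    have hG := (((hD.mul hP1).mul hP2').mul hW).mul hlam
    -- pointwise equality for N > 0
    have hFG : (fun N : ℝ =>
          poch (-(κ:ℝ)) j / ((-1:ℝ)^j * (Nat.factorial j : ℝ)) *
            (poch (-(a + ((κ:ℝ) + c/(u*N^κ)) + N) + (j:ℝ)) (κ-j) / N^(κ-j)) *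
            poch (-((κ:ℝ) + c/(u*N^κ)) + (j:ℝ) + 1) q *
            (-c/(u*N^j)) *
            lam j (-((κ:ℝ) + c/(u*N^κ)) + -a) (theta (-t) (-a - ((κ:ℝ) + c/(u*N^κ)))))
        =ᶠ[atTop] (fun N : ℝ =>
          poch (-(κ:ℝ)) j * poch (-(a + ((κ:ℝ) + c/(u*N^κ)) + N) + (j:ℝ)) (κ-j) *
            poch (-((κ:ℝ) + c/(u*N^κ)) + (j:ℝ) + 1) (κ-j) / ((-1)^j * (Nat.factorial j : ℝ)) *
            lam j (-((κ:ℝ) + c/(u*N^κ)) + -a) (theta (-t) (-a - ((κ:ℝ) + c/(u*N^κ))))) := by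
      filter_upwards [eventually_gt_atTop (0:ℝ)] with N hN
      have hN0 : N ≠ 0 := ne_of_gt hN
      have hNκ : (N:ℝ)^κ ≠ 0 := pow_ne_zero _ hN0
      have hNj : (N:ℝ)^j ≠ 0 := pow_ne_zero _ hN0
      have hNκj : (N:ℝ)^(κ-j) ≠ 0 := pow_ne_zero _ hN0
      have hpow : (N:ℝ)^(κ-j) * N^j = N^κ := by
        rw [← pow_add]
        congr 1
        omega
      have hfacne : ((Nat.factorial j : ℕ) : ℝ) ≠ 0 := by positivity
      have hm1 : ((-1:ℝ)^j) ≠ 0 := pow_ne_zero _ (by norm_num)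
      have hz : (-(((κ:ℝ) + c/(u*N^κ))) + (j:ℝ) + 1 + (q:ℝ)) = -(c/(u*N^κ)) := by
        rw [hcast]; ring
      have hP2eq : poch (-(((κ:ℝ) + c/(u*N^κ))) + (j:ℝ) + 1) (κ-j)
          = poch (-(((κ:ℝ) + c/(u*N^κ))) + (j:ℝ) + 1) q * (-(c/(u*N^κ))) := by
        rw [hq, poch_succ, hz]
      rw [hP2eq]
      rw [show (N:ℝ)^κ = N^(κ-j) * N^j from hpow.symm]
      field_simp
    have hG' := hG.congr' hFG
    -- compute the limit value
    have hval : poch (-(κ:ℝ)) j / ((-1:ℝ)^j * (Nat.factorial j : ℝ)) * (-1:ℝ)^(κ-j) *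
          poch (-(κ:ℝ) + (j:ℝ) + 1) q * (if j = 0 then -c/u else 0) *
          lam j (-(κ:ℝ) + -a) (theta (-t) (-a - (κ:ℝ)))
        = (if j = κ then poch t κ * poch (t+a) κ
            else if j = 0 then c*((Nat.factorial (κ-1) : ℕ):ℝ)/u else 0) := by
      rw [if_neg (ne_of_lt hjκ)]
      by_cases hj0 : j = 0
      · subst hj0
        rw [if_pos rfl, if_pos rfl]
        have hq' : q = κ - 1 := by omega
        have harg : (-(κ:ℝ) + (0:ℕ) + 1) = -(((κ-1 : ℕ):ℕ):ℝ) := by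
          rw [Nat.cast_sub (by omega)]
          push_cast
          ring
        rw [poch_zero, lam_zero, hq', harg, poch_neg_self (κ-1)]
        have hparity : (-1:ℝ)^κ * (-1:ℝ)^(κ-1) = -1 := by
          rw [← pow_add]
          exact Odd.neg_one_pow ⟨κ-1, by omega⟩
        have hκ0 : κ - 0 = κ := by omega
        rw [hκ0]
        simp only [pow_zero, Nat.factorial_zero, Nat.cast_one, one_mul, mul_one]
        linear_combination (-(((Nat.factorial (κ-1) : ℕ):ℝ) * c / u)) * hparity
      · rw [if_neg hj0, if_neg hj0]
        ring
    rw [hval] at hG'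
    exact hG'

lemma dualHahn_tendsto (hκ : 0 < κ) (hu : 0 < u) (a c t : ℝ) :
    Tendsto (fun N : ℝ => dualHahn κ (-((κ:ℝ) + c/(u*N^κ))) (-a)
        (a + ((κ:ℝ) + c/(u*N^κ)) + N) (theta (-t) (-a - ((κ:ℝ) + c/(u*N^κ)))))
      atTop (𝓝 (c*((Nat.factorial (κ-1) : ℕ):ℝ)/u + poch t κ * poch (t+a) κ)) := by
  have hsum := tendsto_finset_sum (Finset.range (κ+1))
    (fun j hj => dual_term_tendsto hκ hu a c t (Nat.lt_succ_iff.mp (Finset.mem_range.mp hj)))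
  have hval : (∑ j ∈ Finset.range (κ+1),
        (if j = κ then poch t κ * poch (t+a) κ
          else if j = 0 then c*((Nat.factorial (κ-1) : ℕ):ℝ)/u else 0))
      = c*((Nat.factorial (κ-1) : ℕ):ℝ)/u + poch t κ * poch (t+a) κ := by
    rw [Finset.sum_range_succ, if_pos rfl]
    have h1 : ∀ j ∈ Finset.range κ,
        (if j = κ then poch t κ * poch (t+a) κ
          else if j = 0 then c*((Nat.factorial (κ-1) : ℕ):ℝ)/u else 0)
        = if j = 0 then c*((Nat.factorial (κ-1) : ℕ):ℝ)/u else 0 := by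
      intro j hj
      rw [if_neg (ne_of_lt (Finset.mem_range.mp hj))]
    rw [Finset.sum_congr rfl h1, Finset.sum_ite_eq' (Finset.range κ) 0
      (fun _ => c*((Nat.factorial (κ-1) : ℕ):ℝ)/u), if_pos (Finset.mem_range.mpr hκ)]
  rw [hval] at hsum
  apply Tendsto.congr _ hsum
  intro N
  simp only [dualHahn]
end Tendsto3
lemma poch_zero_left {κ : ℕ} (hκ : 0 < κ) : poch (0:ℝ) κ = 0 := by
  rw [poch_def]
  exact Finset.prod_eq_zero (Finset.mem_range.mpr hκ) (by simp)

theorem stmt19 (κ : ℕ) (hκ : 0 < κ) (a : ℝ) (ha : -1 < a) (u : ℝ) (hu : 0 < u)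
    (n : ℕ) (x : ℝ)
    (hden : ∀ N : ℝ,
      dualHahn κ (-((κ : ℝ) + (2 : ℝ) ^ (a + κ) / (u * N ^ κ))) (-a)
          (a + ((κ : ℝ) + (2 : ℝ) ^ (a + κ) / (u * N ^ κ)) + N)
          (theta (-(n : ℝ)) (-a - ((κ : ℝ) + (2 : ℝ) ^ (a + κ) / (u * N ^ κ)))) ≠ 0) :
    Tendsto
      (fun N : ℝ =>
        krallHahn n a ((κ : ℝ) + (2 : ℝ) ^ (a + κ) / (u * N ^ κ)) N κ ((1 - x) * N / 2))
      atTop (𝓝 (krallJacobi n a κ u x)) := by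
  have hu' : u ≠ 0 := ne_of_gt hu
  set c : ℝ := (2 : ℝ) ^ (a + (κ:ℝ)) with hcdef
  have hc : 0 < c := by positivity
  set f : ℝ := ((Nat.factorial (κ-1) : ℕ) : ℝ) with hfdef
  have hf : 0 < f := by positivity
  simp only [krallHahn, krallJacobi]
  have hcoeff : Tendsto (fun N : ℝ =>
      ((n:ℝ) + a) * dualHahn κ (-((κ:ℝ) + c/(u*N^κ))) (-a) (a + ((κ:ℝ) + c/(u*N^κ)) + N)
          (theta (-(n:ℝ) - 1) (-a - ((κ:ℝ) + c/(u*N^κ)))) /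
        (((n:ℝ) + a + ((κ:ℝ) + c/(u*N^κ))) *
          dualHahn κ (-((κ:ℝ) + c/(u*N^κ))) (-a) (a + ((κ:ℝ) + c/(u*N^κ)) + N)
            (theta (-(n:ℝ)) (-a - ((κ:ℝ) + c/(u*N^κ))))))
      atTop (𝓝 (((n:ℝ) + a) * (c * ((Nat.factorial (κ-1) : ℕ):ℝ)
            + u * poch ((n:ℝ)+1) κ * poch ((n:ℝ)+a+1) κ) /
          (((n:ℝ) + a + (κ:ℝ)) * (c * ((Nat.factorial (κ-1) : ℕ):ℝ)
            + u * poch (n:ℝ) κ * poch ((n:ℝ)+a) κ)))) := by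
    rw [show -(n:ℝ) - 1 = -((n:ℝ)+1) from by ring]
    have hR1 := dualHahn_tendsto (u := u) hκ hu a c ((n:ℝ)+1)
    have hR2 := dualHahn_tendsto (u := u) hκ hu a c (n:ℝ)
    set L1 : ℝ := c*f/u + poch ((n:ℝ)+1) κ * poch ((n:ℝ)+1+a) κ with hL1def
    set L2 : ℝ := c*f/u + poch (n:ℝ) κ * poch ((n:ℝ)+a) κ with hL2def
    have hconst1 : Tendsto (fun _ : ℝ => ((n:ℝ) + a)) atTop (𝓝 ((n:ℝ) + a)) :=
      tendsto_const_nhds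
    have hnum := hconst1.mul hR1
    have hb := tendsto_b (u := u) hκ hu c
    have hdenT := (hconst1.add hb).mul hR2
    have hL2pos : 0 < L2 := by
      have h2 : 0 ≤ poch (n:ℝ) κ * poch ((n:ℝ)+a) κ := by
        rcases Nat.eq_zero_or_pos n with hn0 | hn1
        · subst hn0
          rw [Nat.cast_zero, poch_zero_left hκ, zero_mul]
        · apply mul_nonneg
          · exact poch_nonneg (by positivity) κ
          · apply poch_nonneg
            have : (1:ℝ) ≤ (n:ℝ) := by exact_mod_cast hn1
            linarith
      have h1 : 0 < c*f/u := by positivity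
      rw [hL2def]
      linarith
    have hnaκ : (0:ℝ) < (n:ℝ) + a + κ := by
      have h1 : (1:ℝ) ≤ (κ:ℝ) := by exact_mod_cast hκ
      have h2 : (0:ℝ) ≤ (n:ℝ) := Nat.cast_nonneg n
      linarith
    have hdenne : ((n:ℝ) + a + (κ:ℝ)) * L2 ≠ 0 := ne_of_gt (mul_pos hnaκ hL2pos)
    have hdiv := hnum.div hdenT hdenne
    have hvalue : ((n:ℝ) + a) * L1 / (((n:ℝ) + a + (κ:ℝ)) * L2)
        = ((n:ℝ) + a) * (c * f + u * poch ((n:ℝ)+1) κ * poch ((n:ℝ)+a+1) κ) /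
          (((n:ℝ) + a + (κ:ℝ)) * (c * f + u * poch (n:ℝ) κ * poch ((n:ℝ)+a) κ)) := by
      have e0 : (n:ℝ) + a + 1 = (n:ℝ) + 1 + a := by ring
      rw [e0]
      have e1 : c*f + u * (poch ((n:ℝ)+1) κ * poch ((n:ℝ)+1+a) κ) = u * L1 := by
        rw [hL1def]; field_simp
      have e2 : c*f + u * (poch (n:ℝ) κ * poch ((n:ℝ)+a) κ) = u * L2 := by
        rw [hL2def]; field_simp
      rw [show u * poch ((n:ℝ)+1) κ * poch ((n:ℝ)+1+a) κ
          = u * (poch ((n:ℝ)+1) κ * poch ((n:ℝ)+1+a) κ) from by ring,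
        show u * poch (n:ℝ) κ * poch ((n:ℝ)+a) κ
          = u * (poch (n:ℝ) κ * poch ((n:ℝ)+a) κ) from by ring, e1, e2,
        show ((n:ℝ) + a) * (u * L1) = u * (((n:ℝ)+a) * L1) from by ring,
        show ((n:ℝ) + a + (κ:ℝ)) * (u * L2) = u * (((n:ℝ)+a+(κ:ℝ)) * L2) from by ring,
        mul_div_mul_left _ _ hu']
    rw [hvalue] at hdiv
    exact hdiv
  have hif : Tendsto (fun N : ℝ =>
      (if n = 0 then (0:ℝ) else hahn (n-1) a ((κ:ℝ) + c/(u*N^κ)) N ((1-x)*N/2)))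
      atTop (𝓝 (if n = 0 then (0:ℝ) else jacobi (n-1) a (κ:ℝ) x)) := by
    by_cases hn : n = 0
    · simp only [hn, if_pos]
      exact tendsto_const_nhds
    · simp only [if_neg hn]
      exact hahn_tendsto hκ ha hu c x (n-1)
  exact Tendsto.add (hahn_tendsto hκ ha hu c x n) (hcoeff.mul hif)
end
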